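/- Let V, W be finite-dimensional complex vector spaces, ħ ≠ 0, and (B₁, B₂, I, J) ADHM data with [B₁,B₂] + I∘J = ħ·id_V. Let (e_i) be a basis of W. Then V = Im(B₂) + Span{ B₁^n I(e_i) : n ≥ 0, all i }. -/

import Mathlib

/-- For ADHM data with `hbar ≠ 0` and any basis `(e_i)` of `W`,
`V = Im(B₂) + Span{B₁^n I(e_i)}`. -/
theorem adhm_range_plus_span
    (V W : Type) [AddCommGroup V] [Module ℂ V] [FiniteDimensional ℂ V]
    [AddCommGroup W] [Module ℂ W] [FiniteDimensional ℂ W]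
    (hbar : ℂ) (hhbar : hbar ≠ 0)
    (B₁ B₂ : V →ₗ[ℂ] V) (I : W →ₗ[ℂ] V) (J : V →ₗ[ℂ] W)
    (hADHM : B₁ ∘ₗ B₂ - B₂ ∘ₗ B₁ + I ∘ₗ J = hbar • (LinearMap.id : V →ₗ[ℂ] V))
    (ι : Type) (b : Module.Basis ι ℂ W) :
    LinearMap.range B₂ ⊔
      Submodule.span ℂ {v : V | ∃ (n : ℕ) (i : ι), v = (B₁ ^ n) (I (b i))} = ⊤ := by
  set U : Submodule ℂ V := LinearMap.range B₂ ⊔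
      Submodule.span ℂ {v : V | ∃ (n : ℕ) (i : ι), v = (B₁ ^ n) (I (b i))} with hU
  -- dual endomorphisms
  set A : Module.Dual ℂ V →ₗ[ℂ] Module.Dual ℂ V := B₁.dualMap with hA
  set C : Module.Dual ℂ V →ₗ[ℂ] Module.Dual ℂ V := B₂.dualMap with hC
  have hAapp : ∀ (ψ : Module.Dual ℂ V) (v : V), (A ψ) v = ψ (B₁ v) := fun _ _ => rfl
  have hCapp : ∀ (ψ : Module.Dual ℂ V) (v : V), (C ψ) v = ψ (B₂ v) := fun _ _ => rfl
  -- value of powers of A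
  have hApow : ∀ (n : ℕ) (φ : Module.Dual ℂ V) (v : V),
      ((A ^ n) φ) v = φ ((B₁ ^ n) v) := by
    intro n
    induction n with
    | zero => intro φ v; simp
    | succ n ih =>
      intro φ v
      have h1 : (A ^ (n + 1)) φ = (A ^ n) (A φ) := by
        rw [pow_succ, Module.End.mul_apply]
      have h2 : (B₁ ^ (n + 1)) v = B₁ ((B₁ ^ n) v) := by
        rw [pow_succ', Module.End.mul_apply]
      rw [h1, h2, ih (A φ) v, hAapp]
  -- the subspace Z of the dual
  set S : Set (Module.Dual ℂ V) :=
    {ψ | ∃ (n : ℕ) (φ : Module.Dual ℂ V), φ ∈ U.dualAnnihilator ∧ ψ = (A ^ n) φ} with hS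
  set Z : Submodule ℂ (Module.Dual ℂ V) := Submodule.span ℂ S with hZ
  -- every element of Z annihilates the range of I
  have hZI : ∀ ψ ∈ Z, ∀ w : W, ψ (I w) = 0 := by
    intro ψ hψ
    induction hψ using Submodule.span_induction with
    | mem x hx =>
      obtain ⟨n, φ, hφ, rfl⟩ := hx
      intro w
      rw [hApow]
      have hw : (B₁ ^ n) (I w) ∈ U := by
        apply Submodule.mem_sup_right
        have hrep : w ∈ Submodule.span ℂ (Set.range b) := by
          rw [b.span_eq]; trivial
        induction hrep using Submodule.span_induction with
        | mem x hx =>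
          obtain ⟨i, rfl⟩ := hx
          exact Submodule.subset_span ⟨n, i, rfl⟩
        | zero => simp
        | add x y _ _ hx hy => rw [map_add, map_add]; exact Submodule.add_mem _ hx hy
        | smul c x _ hx => rw [map_smul, map_smul]; exact Submodule.smul_mem _ _ hx
      exact (Submodule.mem_dualAnnihilator φ).mp hφ _ hw
    | zero => intro w; simp
    | add x y _ _ hx hy => intro w; simp [hx w, hy w]
    | smul c x _ hx => intro w; simp [hx w]
  -- Z is A-invariant
  have hAZ : ∀ ψ ∈ Z, A ψ ∈ Z := by
    intro ψ hψ
    induction hψ using Submodule.span_induction with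
    | mem x hx =>
      obtain ⟨n, φ, hφ, rfl⟩ := hx
      apply Submodule.subset_span
      refine ⟨n + 1, φ, hφ, ?_⟩
      rw [pow_succ', Module.End.mul_apply]
    | zero => simp
    | add x y _ _ hx hy => rw [map_add]; exact Submodule.add_mem _ hx hy
    | smul c x _ hx => rw [map_smul]; exact Submodule.smul_mem _ _ hx
  -- consequence of the ADHM equation
  have hADHM' : ∀ v : V, B₁ (B₂ v) = B₂ (B₁ v) + hbar • v - I (J v) := by
    intro v
    have h := LinearMap.ext_iff.mp hADHM v
    simp only [LinearMap.add_apply, LinearMap.sub_apply, LinearMap.comp_apply,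
      LinearMap.smul_apply, LinearMap.id_apply] at h
    rw [← h]; abel
  -- Z is C-invariant
  have hCZ : ∀ ψ ∈ Z, C ψ ∈ Z := by
    have key : ∀ (n : ℕ) (φ : Module.Dual ℂ V), φ ∈ U.dualAnnihilator →
        C ((A ^ n) φ) ∈ Z := by
      intro n
      induction n with
      | zero =>
        intro φ hφ
        have h0 : C ((A ^ 0) φ) = 0 := by
          ext v
          simp only [pow_zero, Module.End.one_apply, LinearMap.zero_apply, hCapp]
          exact (Submodule.mem_dualAnnihilator φ).mp hφ _
            (Submodule.mem_sup_left (LinearMap.mem_range_self B₂ v))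
        rw [h0]; simp
      | succ n ih =>
        intro φ hφ
        have hmemZ : (A ^ n) φ ∈ Z := Submodule.subset_span ⟨n, φ, hφ, rfl⟩
        have heq : C ((A ^ (n + 1)) φ) = A (C ((A ^ n) φ)) + hbar • (A ^ n) φ := by
          ext v
          have h3 : φ ((B₁ ^ n) (I (J v))) = 0 := by
            rw [← hApow]; exact hZI _ hmemZ (J v)
          have h2 : (B₁ ^ (n + 1)) (B₂ v) = (B₁ ^ n) (B₁ (B₂ v)) := by
            rw [pow_succ, Module.End.mul_apply]
          rw [LinearMap.add_apply, LinearMap.smul_apply, hCapp, hApow, h2, hADHM' v,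
            hAapp, hCapp, hApow, hApow]
          simp only [map_add, map_sub, map_smul, h3, smul_eq_mul]
          ring
        rw [heq]
        exact Submodule.add_mem _ (hAZ _ (ih φ hφ)) (Submodule.smul_mem _ _ hmemZ)
    intro ψ hψ
    induction hψ using Submodule.span_induction with
    | mem x hx =>
      obtain ⟨n, φ, hφ, rfl⟩ := hx
      exact key n φ hφ
    | zero => simp
    | add x y _ _ hx hy => rw [map_add]; exact Submodule.add_mem _ hx hy
    | smul c x _ hx => rw [map_smul]; exact Submodule.smul_mem _ _ hx
  -- the commutation relation on Z
  have hcommZ : ∀ ψ ∈ Z, C (A ψ) - A (C ψ) = hbar • ψ := by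
    intro ψ hψ
    ext v
    rw [LinearMap.sub_apply, LinearMap.smul_apply, hCapp, hAapp, hAapp, hCapp,
      hADHM' v]
    simp only [map_add, map_sub, map_smul, hZI ψ hψ (J v), smul_eq_mul]
    ring
  -- restrict A and C to Z
  set fA : Z →ₗ[ℂ] Z := A.restrict hAZ with hfA
  set fC : Z →ₗ[ℂ] Z := C.restrict hCZ with hfC
  have hcomm : fC ∘ₗ fA - fA ∘ₗ fC = hbar • (LinearMap.id : Z →ₗ[ℂ] Z) := by
    refine LinearMap.ext fun x => Subtype.ext ?_
    have h := hcommZ (x : Module.Dual ℂ V) x.2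
    simp only [LinearMap.sub_apply, LinearMap.comp_apply, LinearMap.smul_apply,
      LinearMap.id_apply, AddSubgroupClass.coe_sub, SetLike.val_smul, hfA, hfC,
      LinearMap.restrict_coe_apply]
    exact h
  -- take traces
  have htr : (0 : ℂ) = hbar * (Module.finrank ℂ Z : ℂ) := by
    calc (0 : ℂ)
        = LinearMap.trace ℂ Z (fC ∘ₗ fA) - LinearMap.trace ℂ Z (fA ∘ₗ fC) := by
          rw [LinearMap.trace_comp_comm' fC fA, sub_self]
      _ = LinearMap.trace ℂ Z (fC ∘ₗ fA - fA ∘ₗ fC) :=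
          (map_sub (LinearMap.trace ℂ Z) (fC ∘ₗ fA) (fA ∘ₗ fC)).symm
      _ = LinearMap.trace ℂ Z (hbar • (LinearMap.id : Z →ₗ[ℂ] Z)) := by rw [hcomm]
      _ = hbar * (Module.finrank ℂ Z : ℂ) := by
          rw [map_smul, LinearMap.trace_id, smul_eq_mul]
  have hfr : (Module.finrank ℂ Z : ℂ) = 0 := by
    rcases mul_eq_zero.mp htr.symm with h | h
    · exact absurd h hhbar
    · exact h
  have hZbot : Z = ⊥ := by
    have : Module.finrank ℂ Z = 0 := by exact_mod_cast hfr
    exact Submodule.finrank_eq_zero.mp this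
  -- conclude
  have hann : U.dualAnnihilator = ⊥ := by
    rw [eq_bot_iff]
    intro φ hφ
    have : φ ∈ Z := Submodule.subset_span ⟨0, φ, hφ, by simp⟩
    rwa [hZbot] at this
  have hfin : U.dualAnnihilator = (⊤ : Submodule ℂ V).dualAnnihilator := by
    rw [hann, Submodule.dualAnnihilator_top]
  exact Subspace.dualAnnihilator_inj.mp hfin
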